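/- Let C ⊂ ℝ^k be the simplicial cone generated by linearly independent vectors α_1,…,α_k ∈ ℚ^k whose ℤ-span Λ_C* contains ℤ^k, let Λ_C be the dual lattice of Λ_C* and Γ_C = ℤ^k/Λ_C (a finite group, where ℤ^k is the dual lattice of (ℤ^k)* = ℤ^k). For γ ∈ Γ_C set c_j(γ) = exp(2πi⟨α_j, γ⟩). Then for all ξ ∈ ℂ^k such that Re(2πi⟨μ,ξ⟩) < 0 for all nonzero μ ∈ C ∩ ℤ^k, we have (1/#Γ_C) Σ_{γ∈Γ_C} ∏_{j=1}^k (1 - c_j(γ) e^{2πi⟨α_j,ξ⟩})^{-1} = Σ_{μ ∈ C ∩ ℤ^k} e^{2πi⟨μ,ξ⟩}. -/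

import Mathlib

open Complex Finset

lemma hasSum_pi_prod_real : ∀ (k : ℕ) (x : Fin k → ℝ), (∀ j, 0 ≤ x j) → (∀ j, x j < 1) →
    HasSum (fun n : Fin k → ℕ => ∏ j, x j ^ n j) (∏ j, (1 - x j)⁻¹) := by
  intro k
  induction k with
  | zero =>
    intro x _ _
    have h : (fun n : Fin 0 → ℕ => ∏ j, x j ^ n j) = fun _ => (1:ℝ) := by
      funext n; simp
    rw [h]
    simpa using hasSum_single (f := fun _ : Fin 0 → ℕ => (1:ℝ)) (fun _ => 0)
      (fun b hb => absurd (Subsingleton.elim b _) hb)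
  | succ k ih =>
    intro x h0 h1
    have htail := ih (fun j => x (Fin.succ j)) (fun j => h0 _) (fun j => h1 _)
    have hgeo := hasSum_geometric_of_lt_one (h0 0) (h1 0)
    have hsummable := Summable.mul_of_nonneg hgeo.summable htail.summable
        (Pi.le_def.mpr fun n => pow_nonneg (h0 0) n)
        (Pi.le_def.mpr fun m => Finset.prod_nonneg fun j _ => pow_nonneg (h0 _) _)
    have hmul := hgeo.mul htail hsummable
    have h2 := (((Fin.consEquiv (fun _ : Fin (k+1) => ℕ)).symm).hasSum_iff (f := fun p : ℕ × (Fin k → ℕ) =>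
        x 0 ^ p.1 * ∏ j : Fin k, x (Fin.succ j) ^ p.2 j)).mpr hmul
    have hcomp : ((fun p : ℕ × (Fin k → ℕ) => x 0 ^ p.1 * ∏ j : Fin k, x (Fin.succ j) ^ p.2 j)
        ∘ ⇑((Fin.consEquiv (fun _ : Fin (k+1) => ℕ)).symm)) = fun n : Fin (k+1) → ℕ =>
        x 0 ^ n 0 * ∏ j : Fin k, x (Fin.succ j) ^ n (Fin.succ j) := by
      funext n; rfl
    rw [hcomp] at h2
    have heq : (fun n : Fin (k+1) → ℕ => ∏ j, x j ^ n j) = (fun n : Fin (k+1) → ℕ =>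
        x 0 ^ (n 0) * ∏ j : Fin k, x (Fin.succ j) ^ n (Fin.succ j)) := by
      funext n; exact Fin.prod_univ_succ _
    rw [Fin.prod_univ_succ, heq]
    exact h2

lemma hasSum_pi_prod_complex : ∀ (k : ℕ) (x : Fin k → ℂ), (∀ j, ‖x j‖ < 1) →
    HasSum (fun n : Fin k → ℕ => ∏ j, x j ^ n j) (∏ j, (1 - x j)⁻¹) := by
  intro k
  induction k with
  | zero =>
    intro x _
    have h : (fun n : Fin 0 → ℕ => ∏ j, x j ^ n j) = fun _ => (1:ℂ) := by
      funext n; simp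
    rw [h]
    simpa using hasSum_single (f := fun _ : Fin 0 → ℕ => (1:ℂ)) (fun _ => 0)
      (fun b hb => absurd (Subsingleton.elim b _) hb)
  | succ k ih =>
    intro x h1
    have htail := ih (fun j => x (Fin.succ j)) (fun j => h1 _)
    have hgeo := hasSum_geometric_of_norm_lt_one (h1 0)
    have hnorm1 : Summable (fun n : ℕ => ‖x 0 ^ n‖) := by
      have := (hasSum_geometric_of_lt_one (norm_nonneg (x 0)) (h1 0)).summable
      simpa [norm_pow] using this
    have hnorm2 : Summable (fun m : Fin k → ℕ => ‖∏ j : Fin k, x (Fin.succ j) ^ m j‖) := by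
      have := (hasSum_pi_prod_real k (fun j => ‖x (Fin.succ j)‖)
        (fun j => norm_nonneg _) (fun j => h1 _)).summable
      simpa [norm_prod, norm_pow] using this
    have hsummable := summable_mul_of_summable_norm hnorm1 hnorm2
    have hmul := hgeo.mul htail hsummable
    have h2 := (((Fin.consEquiv (fun _ : Fin (k+1) => ℕ)).symm).hasSum_iff (f := fun p : ℕ × (Fin k → ℕ) =>
        x 0 ^ p.1 * ∏ j : Fin k, x (Fin.succ j) ^ p.2 j)).mpr hmul
    have hcomp : ((fun p : ℕ × (Fin k → ℕ) => x 0 ^ p.1 * ∏ j : Fin k, x (Fin.succ j) ^ p.2 j)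
        ∘ ⇑((Fin.consEquiv (fun _ : Fin (k+1) => ℕ)).symm)) = fun n : Fin (k+1) → ℕ =>
        x 0 ^ n 0 * ∏ j : Fin k, x (Fin.succ j) ^ n (Fin.succ j) := by
      funext n; rfl
    rw [hcomp] at h2
    have heq : (fun n : Fin (k+1) → ℕ => ∏ j, x j ^ n j) = (fun n : Fin (k+1) → ℕ =>
        x 0 ^ (n 0) * ∏ j : Fin k, x (Fin.succ j) ^ n (Fin.succ j)) := by
      funext n; exact Fin.prod_univ_succ _
    rw [Fin.prod_univ_succ, heq]
    exact h2

noncomputable def eChar (k : ℕ) (β : Fin k → ℚ) (v : Fin k → ℤ) : ℂ :=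
  Complex.exp (2 * Real.pi * Complex.I * ∑ i, (β i : ℂ) * (v i : ℂ))

lemma eChar_add (k : ℕ) (β : Fin k → ℚ) (v w : Fin k → ℤ) :
    eChar k β (v + w) = eChar k β v * eChar k β w := by
  rw [eChar, eChar, eChar, ← Complex.exp_add, ← mul_add, ← Finset.sum_add_distrib]
  congr 2
  refine Finset.sum_congr rfl fun i _ => ?_
  have : ((v + w) i : ℂ) = (v i : ℂ) + (w i : ℂ) := by push_cast [Pi.add_apply]; ring
  rw [this]; ring

lemma eChar_int (k : ℕ) (β : Fin k → ℚ) (v : Fin k → ℤ)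
    (h : ∃ m : ℤ, ∑ i, β i * (v i : ℚ) = (m : ℚ)) : eChar k β v = 1 := by
  obtain ⟨m, hm⟩ := h
  have h2 : (∑ i, (β i : ℂ) * (v i : ℂ)) = (m : ℂ) := by
    have := congrArg (Rat.cast : ℚ → ℂ) hm
    push_cast at this
    exact this
  rw [eChar, h2, show 2 * (Real.pi : ℂ) * Complex.I * (m : ℂ)
    = (m : ℂ) * (2 * (Real.pi : ℂ) * Complex.I) by ring]
  exact Complex.exp_int_mul_two_pi_mul_I m

noncomputable def charFun {k : ℕ} (Λ : AddSubgroup (Fin k → ℤ)) (β : Fin k → ℚ)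
    (hβ : ∀ v ∈ Λ, eChar k β v = 1) : ((Fin k → ℤ) ⧸ Λ) → ℂ :=
  fun γ => Quotient.liftOn' γ (eChar k β) (fun a b hab => by
    have hm : -a + b ∈ Λ := QuotientAddGroup.leftRel_apply.mp hab
    have h2 : eChar k β b = eChar k β (a + (-a + b)) := by rw [add_neg_cancel_left]
    rw [h2, eChar_add, hβ _ hm, mul_one])

lemma charFun_mk {k : ℕ} (Λ : AddSubgroup (Fin k → ℤ)) (β : Fin k → ℚ)
    (hβ : ∀ v ∈ Λ, eChar k β v = 1) (v : Fin k → ℤ) :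
    charFun Λ β hβ (QuotientAddGroup.mk v) = eChar k β v := rfl

lemma charFun_add {k : ℕ} (Λ : AddSubgroup (Fin k → ℤ)) (β : Fin k → ℚ)
    (hβ : ∀ v ∈ Λ, eChar k β v = 1) (γ δ : (Fin k → ℤ) ⧸ Λ) :
    charFun Λ β hβ (γ + δ) = charFun Λ β hβ γ * charFun Λ β hβ δ := by
  induction γ using QuotientAddGroup.induction_on with
  | H v =>
    induction δ using QuotientAddGroup.induction_on with
    | H w =>
      rw [← QuotientAddGroup.mk_add, charFun_mk, charFun_mk, charFun_mk, eChar_add]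

lemma char_sum_zero {G : Type*} [AddCommGroup G] [Fintype G] (g : G → ℂ)
    (hmul : ∀ a b, g (a + b) = g a * g b) (x : G) (hx : g x ≠ 1) :
    ∑ γ, g γ = 0 := by
  have h1 : g x * ∑ γ, g γ = ∑ γ, g γ := by
    rw [Finset.mul_sum]
    simp_rw [← hmul]
    exact Fintype.sum_equiv (Equiv.addLeft x) _ _ (fun γ => rfl)
  rcases mul_eq_zero.mp (show (g x - 1) * ∑ γ, g γ = 0 by
      rw [sub_mul, one_mul, h1, sub_self]) with h | h
  · exact absurd (sub_eq_zero.mp h) hx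
  · exact h

open Classical in
lemma charSum {k : ℕ} (Λ : AddSubgroup (Fin k → ℤ)) [Fintype ((Fin k → ℤ) ⧸ Λ)]
    (β : Fin k → ℚ) (hβ : ∀ v ∈ Λ, eChar k β v = 1) :
    ∑ γ, charFun Λ β hβ γ =
      if (∃ m : Fin k → ℤ, ∀ i, β i = (m i : ℚ)) then
        (Fintype.card ((Fin k → ℤ) ⧸ Λ) : ℂ) else 0 := by
  classical
  split_ifs with h
  · obtain ⟨m, hm⟩ := h
    have hone : ∀ γ : (Fin k → ℤ) ⧸ Λ, charFun Λ β hβ γ = 1 := by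
      intro γ
      induction γ using QuotientAddGroup.induction_on with
      | H v =>
        rw [charFun_mk]
        refine eChar_int k β v ⟨∑ i, m i * v i, ?_⟩
        push_cast
        exact Finset.sum_congr rfl fun i _ => by rw [hm i]
    simp [hone, Finset.card_univ]
  · have h2 : ∃ i, ∀ z : ℤ, β i ≠ (z : ℚ) := by
      by_contra h3
      push_neg at h3
      exact h ⟨fun i => (h3 i).choose, fun i => (h3 i).choose_spec⟩
    obtain ⟨i, hi⟩ := h2
    refine char_sum_zero _ (charFun_add Λ β hβ) (QuotientAddGroup.mk (Pi.single i 1)) ?_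
    rw [charFun_mk, eChar]
    have hs : (∑ i', (β i' : ℂ) * ((Pi.single i (1:ℤ) : Fin k → ℤ) i' : ℂ)) = (β i : ℂ) := by
      rw [Finset.sum_eq_single i]
      · simp
      · intro b _ hb
        simp [Pi.single_apply, hb]
      · simp
    rw [hs]
    intro hone
    obtain ⟨n, hn⟩ := Complex.exp_eq_one_iff.mp hone
    have h4 : (β i : ℂ) * (2 * (Real.pi : ℂ) * Complex.I)
        = (n : ℂ) * (2 * (Real.pi : ℂ) * Complex.I) := by rw [← hn]; ring
    have h5 : (β i : ℂ) = (n : ℂ) := by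
      have hne : (2 * (Real.pi : ℂ) * Complex.I) ≠ 0 := by
        simp [Real.pi_ne_zero, Complex.I_ne_zero]
      exact mul_right_cancel₀ hne h4
    exact hi n (by exact_mod_cast h5)

lemma norm_q_lt_one (k : ℕ) (α : Fin k → (Fin k → ℚ))
    (hind : LinearIndependent ℚ α) (ξ : Fin k → ℂ)
    (hξ : ∀ μ : Fin k → ℤ, μ ≠ 0 →
      (∃ t : Fin k → ℝ, (∀ j, 0 ≤ t j) ∧ ∀ i, (μ i : ℝ) = ∑ j, t j * (α j i : ℝ)) →
      (2 * Real.pi * Complex.I * ∑ i, (μ i : ℂ) * ξ i).re < 0) (j : Fin k) :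
    ‖Complex.exp (2 * Real.pi * Complex.I * ∑ i, (α j i : ℂ) * ξ i)‖ < 1 := by
  classical
  set N : ℕ := ∏ i, (α j i).den with hNdef
  have hNpos : 0 < N := Finset.prod_pos fun i _ => (α j i).pos
  set μ : Fin k → ℤ := fun i => ((N / (α j i).den : ℕ) : ℤ) * (α j i).num with hμdef
  have hμQ : ∀ i, (μ i : ℚ) = (N : ℚ) * α j i := by
    intro i
    have hd : (α j i).den ∣ N := Finset.dvd_prod_of_mem _ (Finset.mem_univ i)
    have hcd : ((N / (α j i).den : ℕ) : ℚ) * ((α j i).den : ℚ) = (N : ℚ) := by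
      exact_mod_cast Nat.div_mul_cancel hd
    have hden : ((α j i).den : ℚ) ≠ 0 := by exact_mod_cast (α j i).den_ne_zero
    have hq : ((α j i).num : ℚ) = ((α j i).den : ℚ) * α j i := by
      rw [Rat.den_mul_eq_num]
    simp only [hμdef]
    rw [Int.cast_mul, Int.cast_natCast, hq, ← hcd]
    ring
  have hμ0 : μ ≠ 0 := by
    intro h0
    refine hind.ne_zero j (funext fun i => ?_)
    have h1 : (μ i : ℚ) = 0 := by rw [h0]; simp
    rw [hμQ i] at h1
    have hN0 : (N : ℚ) ≠ 0 := by exact_mod_cast hNpos.ne'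
    simpa [hN0] using h1
  have hcone : ∃ t : Fin k → ℝ, (∀ j', 0 ≤ t j') ∧
      ∀ i, (μ i : ℝ) = ∑ j', t j' * (α j' i : ℝ) := by
    refine ⟨Pi.single j (N : ℝ), fun j' => ?_, fun i => ?_⟩
    · rcases eq_or_ne j' j with rfl | h
      · simp
      · simp [Pi.single_apply, h]
    · rw [Finset.sum_eq_single j]
      · have := congrArg (Rat.cast : ℚ → ℝ) (hμQ i)
        push_cast at this
        simpa using this
      · intro b _ hb
        simp [Pi.single_apply, hb]
      · simp
  have hre := hξ μ hμ0 hcone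
  have hsum : (∑ i, (μ i : ℂ) * ξ i) = (N : ℂ) * ∑ i, (α j i : ℂ) * ξ i := by
    rw [Finset.mul_sum]
    refine Finset.sum_congr rfl fun i _ => ?_
    have h2 := congrArg (Rat.cast : ℚ → ℂ) (hμQ i)
    push_cast at h2
    rw [h2]; ring
  rw [hsum] at hre
  have hmulre : (2 * (Real.pi : ℂ) * Complex.I * ((N : ℂ) * ∑ i, (α j i : ℂ) * ξ i)).re
      = (N : ℝ) * (2 * (Real.pi : ℂ) * Complex.I * ∑ i, (α j i : ℂ) * ξ i).re := by
    rw [show 2 * (Real.pi : ℂ) * Complex.I * ((N : ℂ) * ∑ i, (α j i : ℂ) * ξ i)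
      = (N : ℂ) * (2 * (Real.pi : ℂ) * Complex.I * ∑ i, (α j i : ℂ) * ξ i) by ring]
    simp [Complex.mul_re]
  rw [hmulre] at hre
  have hNR : (0 : ℝ) < (N : ℝ) := by exact_mod_cast hNpos
  have hre2 : (2 * (Real.pi : ℂ) * Complex.I * ∑ i, (α j i : ℂ) * ξ i).re < 0 := by
    nlinarith
  rw [Complex.norm_exp]
  exact Real.exp_lt_one_iff.mpr hre2

def coefβ {k : ℕ} (α : Fin k → (Fin k → ℚ)) (n : Fin k → ℕ) : Fin k → ℚ :=
  fun i => ∑ j, (n j : ℚ) * α j i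

lemma cone_rep (k : ℕ) (α : Fin k → (Fin k → ℚ)) (hind : LinearIndependent ℚ α)
    (hcont : ∀ m : Fin k → ℤ, (fun i => (m i : ℚ)) ∈ Submodule.span ℤ (Set.range α))
    (μ : Fin k → ℤ) (t : Fin k → ℝ) (ht0 : ∀ j, 0 ≤ t j)
    (htμ : ∀ i, (μ i : ℝ) = ∑ j, t j * (α j i : ℝ)) :
    ∃ n : Fin k → ℕ, ∀ i, coefβ α n i = (μ i : ℚ) := by
  classical
  obtain ⟨c, hc⟩ := (Submodule.mem_span_range_iff_exists_fun ℤ).mp (hcont μ)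
  have hcQ : ∀ i, ∑ j, (c j : ℚ) * α j i = (μ i : ℚ) := by
    intro i
    have := congrFun hc i
    simpa [Finset.sum_apply, zsmul_eq_mul] using this
  have hA : IsUnit (Matrix.of α) := Matrix.linearIndependent_rows_iff_isUnit.mp hind
  set B : Matrix (Fin k) (Fin k) ℝ := (Matrix.of α).map (Rat.cast : ℚ → ℝ) with hBdef
  have hB : IsUnit B := by
    rw [Matrix.isUnit_iff_isUnit_det] at hA ⊢
    have hdet : B.det = ((Matrix.of α).det : ℝ) := by
      have h := RingHom.map_det (Rat.castHom ℝ) (Matrix.of α)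
      rw [RingHom.mapMatrix_apply, Rat.coe_castHom] at h
      exact h.symm
    rw [hdet]
    have := isUnit_iff_ne_zero.mp hA
    exact isUnit_iff_ne_zero.mpr (by exact_mod_cast this)
  have hinj : Function.Injective B.vecMul := Matrix.vecMul_injective_iff_isUnit.mpr hB
  have h1 : B.vecMul (fun j => (c j : ℝ)) = fun i => (μ i : ℝ) := by
    funext i
    simp only [Matrix.vecMul, dotProduct, hBdef, Matrix.map_apply, Matrix.of_apply]
    have h2 := congrArg (Rat.cast : ℚ → ℝ) (hcQ i)
    push_cast at h2
    exact h2
  have h2 : B.vecMul t = fun i => (μ i : ℝ) := by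
    funext i
    simp only [Matrix.vecMul, dotProduct, hBdef, Matrix.map_apply, Matrix.of_apply]
    exact (htμ i).symm
  have heq : (fun j => (c j : ℝ)) = t := hinj (h1.trans h2.symm)
  have hc0 : ∀ j, 0 ≤ c j := by
    intro j
    have : (0 : ℝ) ≤ (c j : ℝ) := by rw [congrFun heq j] at *; exact (congrFun heq j) ▸ ht0 j
    exact_mod_cast this
  refine ⟨fun j => (c j).toNat, fun i => ?_⟩
  rw [← hcQ i]
  refine Finset.sum_congr rfl fun j _ => ?_
  congr 1
  exact_mod_cast congrArg (Int.cast : ℤ → ℚ) (Int.toNat_of_nonneg (hc0 j))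

lemma exp_prod_pow (k : ℕ) (α : Fin k → (Fin k → ℚ)) (n : Fin k → ℕ) (w : Fin k → ℂ) :
    ∏ j, Complex.exp (2 * Real.pi * Complex.I * ∑ i, (α j i : ℂ) * w i) ^ (n j)
      = Complex.exp (2 * Real.pi * Complex.I * ∑ i, (coefβ α n i : ℂ) * w i) := by
  have h1 : ∀ j : Fin k, Complex.exp (2 * Real.pi * Complex.I * ∑ i, (α j i : ℂ) * w i) ^ (n j)
      = Complex.exp ((n j : ℂ) * (2 * Real.pi * Complex.I * ∑ i, (α j i : ℂ) * w i)) :=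
    fun j => (Complex.exp_nat_mul _ (n j)).symm
  rw [Finset.prod_congr rfl fun j _ => h1 j, ← Complex.exp_sum]
  congr 1
  simp only [coefβ]
  push_cast
  simp only [Finset.mul_sum, Finset.sum_mul]
  rw [Finset.sum_comm]
  exact Finset.sum_congr rfl fun i _ => Finset.sum_congr rfl fun j _ => by ring

/-- Character identity for a simplicial cone (Lemma `char` in the paper).
Let `C ⊂ ℝ^k` be the simplicial cone generated by linearly independent
rational vectors `α_1, …, α_k` whose `ℤ`-span `Λ_C*` contains `ℤ^k`; let
`Λ_C ⊆ ℤ^k` be the dual lattice (lattice vectors pairing integrally with all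
`α_j`) and `Γ_C = ℤ^k/Λ_C` (a finite group).  For `γ ∈ Γ_C` set
`c_j(γ) = exp(2πi⟨α_j,γ⟩)` (well defined on cosets).  Then for all `ξ ∈ ℂ^k`
such that `Re(2πi⟨μ,ξ⟩) < 0` for all nonzero lattice points `μ` of the cone,
`(1/#Γ_C) Σ_{γ∈Γ_C} ∏_j (1 - c_j(γ)e^{2πi⟨α_j,ξ⟩})⁻¹ = Σ_{μ∈C∩ℤ^k} e^{2πi⟨μ,ξ⟩}`. -/
theorem stmt3 (k : ℕ) (hk : 0 < k) (α : Fin k → (Fin k → ℚ))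
    (hind : LinearIndependent ℚ α)
    (hcont : ∀ m : Fin k → ℤ, (fun i => (m i : ℚ)) ∈ Submodule.span ℤ (Set.range α))
    (Λ : AddSubgroup (Fin k → ℤ))
    (hΛ : ∀ v : Fin k → ℤ, v ∈ Λ ↔ ∀ j, ∃ m : ℤ, ∑ i, α j i * v i = (m : ℚ))
    [Fintype ((Fin k → ℤ) ⧸ Λ)]
    (F : ((Fin k → ℤ) ⧸ Λ) → ℂ) (ξ : Fin k → ℂ)
    (hF : ∀ v : Fin k → ℤ, F (QuotientAddGroup.mk v) =
      ∏ j, (1 - Complex.exp (2 * Real.pi * Complex.I * ∑ i, (α j i : ℂ) * (v i : ℂ)) *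
        Complex.exp (2 * Real.pi * Complex.I * ∑ i, (α j i : ℂ) * ξ i))⁻¹)
    (hξ : ∀ μ : Fin k → ℤ, μ ≠ 0 →
      (∃ t : Fin k → ℝ, (∀ j, 0 ≤ t j) ∧ ∀ i, (μ i : ℝ) = ∑ j, t j * (α j i : ℝ)) →
      (2 * Real.pi * Complex.I * ∑ i, (μ i : ℂ) * ξ i).re < 0) :
    (1 / (Fintype.card ((Fin k → ℤ) ⧸ Λ) : ℂ)) * ∑ γ, F γ =
      ∑' μ : {μ : Fin k → ℤ //
          ∃ t : Fin k → ℝ, (∀ j, 0 ≤ t j) ∧ ∀ i, ((μ : Fin k → ℤ) i : ℝ) = ∑ j, t j * (α j i : ℝ)},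
        Complex.exp (2 * Real.pi * Complex.I * ∑ i, ((μ : Fin k → ℤ) i : ℂ) * ξ i) := by
  classical
  -- compatibility of the characters with Λ
  have hcompat : ∀ n : Fin k → ℕ, ∀ v ∈ Λ, eChar k (coefβ α n) v = 1 := by
    intro n v hv
    choose m hm using (hΛ v).mp hv
    refine eChar_int k _ v ⟨∑ j, (n j : ℤ) * m j, ?_⟩
    push_cast
    simp only [coefβ, Finset.sum_mul]
    rw [Finset.sum_comm]
    refine Finset.sum_congr rfl fun j _ => ?_
    rw [← hm j, Finset.mul_sum]
    exact Finset.sum_congr rfl fun i _ => by ring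
  have hq : ∀ j, ‖Complex.exp (2 * Real.pi * Complex.I * ∑ i, (α j i : ℂ) * ξ i)‖ < 1 :=
    norm_q_lt_one k α hind ξ hξ
  -- the key HasSum statement
  have hkey : ∀ v : Fin k → ℤ, HasSum (fun n : Fin k → ℕ =>
      charFun Λ (coefβ α n) (hcompat n) (QuotientAddGroup.mk v) *
        Complex.exp (2 * Real.pi * Complex.I * ∑ i, (coefβ α n i : ℂ) * ξ i))
      (F (QuotientAddGroup.mk v)) := by
    intro v
    rw [hF v]
    have hx : ∀ j, ‖Complex.exp (2 * Real.pi * Complex.I * ∑ i, (α j i : ℂ) * (v i : ℂ)) *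
        Complex.exp (2 * Real.pi * Complex.I * ∑ i, (α j i : ℂ) * ξ i)‖ < 1 := by
      intro j
      rw [norm_mul]
      have habs : ‖Complex.exp (2 * Real.pi * Complex.I * ∑ i, (α j i : ℂ) * (v i : ℂ))‖ = 1 := by
        rw [Complex.norm_exp]
        have hcast : (∑ i, (α j i : ℂ) * (v i : ℂ)) = ((∑ i, α j i * (v i : ℚ) : ℚ) : ℂ) := by
          push_cast; rfl
        rw [hcast]
        norm_num [Complex.mul_re]
      rw [habs, one_mul]
      exact hq j
    have hs := hasSum_pi_prod_complex k _ hx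
    have heq : (fun n : Fin k → ℕ =>
        charFun Λ (coefβ α n) (hcompat n) (QuotientAddGroup.mk v) *
          Complex.exp (2 * Real.pi * Complex.I * ∑ i, (coefβ α n i : ℂ) * ξ i))
        = fun n : Fin k → ℕ =>
          ∏ j, (Complex.exp (2 * Real.pi * Complex.I * ∑ i, (α j i : ℂ) * (v i : ℂ)) *
            Complex.exp (2 * Real.pi * Complex.I * ∑ i, (α j i : ℂ) * ξ i)) ^ (n j) := by
      funext n
      simp only [mul_pow]
      rw [Finset.prod_mul_distrib, exp_prod_pow, exp_prod_pow, charFun_mk, eChar]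
    rw [heq]
    exact hs
  -- swap the finite sum and the tsum
  have hswap : ∑ γ, F γ = ∑' n : Fin k → ℕ, ∑ γ,
      charFun Λ (coefβ α n) (hcompat n) γ *
        Complex.exp (2 * Real.pi * Complex.I * ∑ i, (coefβ α n i : ℂ) * ξ i) := by
    have h1 : ∀ γ : (Fin k → ℤ) ⧸ Λ, F γ = ∑' n : Fin k → ℕ,
        charFun Λ (coefβ α n) (hcompat n) γ *
          Complex.exp (2 * Real.pi * Complex.I * ∑ i, (coefβ α n i : ℂ) * ξ i) := by
      intro γ
      induction γ using QuotientAddGroup.induction_on with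
      | H v => exact ((hkey v).tsum_eq).symm
    rw [Finset.sum_congr rfl fun γ _ => h1 γ]
    refine (Summable.tsum_finsetSum fun γ _ => ?_).symm
    induction γ using QuotientAddGroup.induction_on with
    | H v => exact (hkey v).summable
  rw [hswap, ← tsum_mul_left]
  -- compute each term
  have hNc : ((Fintype.card ((Fin k → ℤ) ⧸ Λ) : ℂ)) ≠ 0 := by
    exact_mod_cast (Nat.cast_ne_zero (R := ℂ)).mpr Fintype.card_ne_zero
  have hterm : ∀ n : Fin k → ℕ, (1 / (Fintype.card ((Fin k → ℤ) ⧸ Λ) : ℂ)) * ∑ γ,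
      charFun Λ (coefβ α n) (hcompat n) γ *
        Complex.exp (2 * Real.pi * Complex.I * ∑ i, (coefβ α n i : ℂ) * ξ i)
      = if (∃ m : Fin k → ℤ, ∀ i, coefβ α n i = (m i : ℚ)) then
          Complex.exp (2 * Real.pi * Complex.I * ∑ i, (coefβ α n i : ℂ) * ξ i) else 0 := by
    intro n
    rw [← Finset.sum_mul, charSum Λ (coefβ α n) (hcompat n)]
    split_ifs with h
    · field_simp
    · simp
  rw [tsum_congr hterm]
  -- reindex the sum over the lattice points of the cone
  set P : (Fin k → ℕ) → Prop := fun n => ∃ m : Fin k → ℤ, ∀ i, coefβ α n i = (m i : ℚ) with hPdef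
  have hnum : ∀ n : Fin k → ℕ, P n → ∀ i, (((coefβ α n i).num : ℤ) : ℚ) = coefβ α n i := by
    rintro n ⟨m, hm⟩ i
    rw [hm i]
    simp
  have hcone' : ∀ (s : {n : Fin k → ℕ // P n}) (i : Fin k),
      (((coefβ α s.1 i).num : ℤ) : ℝ) = ∑ j, (s.1 j : ℝ) * (α j i : ℝ) := by
    intro s i
    have h2 := congrArg (Rat.cast : ℚ → ℝ) (hnum s.1 s.2 i)
    push_cast at h2
    rw [h2]
    simp only [coefβ]
    push_cast
    rfl
  set Φ : {n : Fin k → ℕ // P n} → {μ : Fin k → ℤ //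
      ∃ t : Fin k → ℝ, (∀ j, 0 ≤ t j) ∧ ∀ i, ((μ : Fin k → ℤ) i : ℝ) = ∑ j, t j * (α j i : ℝ)} :=
    fun s => ⟨fun i => (coefβ α s.1 i).num,
      ⟨fun j => (s.1 j : ℝ), fun j => Nat.cast_nonneg _, hcone' s⟩⟩ with hΦdef
  have hbij : Function.Bijective Φ := by
    constructor
    · intro s s' hss
      have h1 : ∀ i, coefβ α s.1 i = coefβ α s'.1 i := by
        intro i
        have h0 := congrFun (congrArg Subtype.val hss) i
        simp only [hΦdef] at h0
        rw [← hnum s.1 s.2 i, ← hnum s'.1 s'.2 i]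
        exact_mod_cast h0
      have h3 := Fintype.linearIndependent_iff.mp hind
        (fun j => (s.1 j : ℚ) - (s'.1 j : ℚ)) (by
          funext i
          rw [Finset.sum_apply]
          simp only [Pi.smul_apply, smul_eq_mul, sub_mul]
          rw [Finset.sum_sub_distrib]
          have h4 := h1 i
          simp only [coefβ] at h4
          rw [h4, sub_self]
          rfl)
      refine Subtype.ext (funext fun j => ?_)
      have h5 := h3 j
      have h6 : (s.1 j : ℚ) = (s'.1 j : ℚ) := by linarith [sub_eq_zero.mp h5]
      exact_mod_cast h6
    · rintro ⟨μ, t, ht0, htμ⟩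
      obtain ⟨n, hn⟩ := cone_rep k α hind hcont μ t ht0 htμ
      refine ⟨⟨n, ⟨μ, fun i => by rw [hn i]⟩⟩, ?_⟩
      apply Subtype.ext
      funext i
      show (coefβ α n i).num = μ i
      rw [hn i]
      simp
  have hsupp : Function.support (fun n : Fin k → ℕ =>
      if P n then Complex.exp (2 * Real.pi * Complex.I * ∑ i, (coefβ α n i : ℂ) * ξ i) else 0)
      ⊆ {n : Fin k → ℕ | P n} := by
    intro n hn
    by_contra hP
    exact hn (if_neg hP)
  rw [← tsum_subtype_eq_of_support_subset hsupp]
  rw [← (Equiv.ofBijective Φ hbij).tsum_eq]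
  refine tsum_congr fun s => ?_
  rw [if_pos (show P s.1 from s.2)]
  have h8 : ((Equiv.ofBijective Φ hbij) s : Fin k → ℤ) = fun i => (coefβ α s.1 i).num := by
    rw [Equiv.ofBijective_apply, hΦdef]
  rw [h8]
  congr 1
  congr 1
  refine Finset.sum_congr rfl fun i _ => ?_
  have h7 := congrArg (Rat.cast : ℚ → ℂ) (hnum s.1 s.2 i)
  push_cast at h7
  rw [h7]
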